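/- Let q be a prime power. For any mutually distinct 1-dimensional subspaces P₁, P₂, P₃ contained in a simplex line L of F^(q+1) and any mutually distinct 1-dimensional subspaces P₁′, P₂′, P₃′ contained in a simplex line L′, there exists a monomial linear automorphism l of F^(q+1) such that l(Pᵢ) = Pᵢ′ for i = 1, 2, 3. -/

import Mathlib

open Submodule Module

/-- All columns of the 2×n matrix with rows `x` and `y` are nonzero and pairwise
non-proportional (equivalently, every 2×2 minor is nonzero). -/
def GoodPair {F : Type} [Field F] {n : ℕ} (x y : Fin n → F) : Prop :=
  ∀ i j : Fin n, i ≠ j → x i * y j ≠ x j * y i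

/-- A simplex line: a 2-dimensional subspace spanned by the rows of a generator
matrix all of whose columns are nonzero and pairwise non-proportional. -/
def IsSimplexLine {F : Type} [Field F] {n : ℕ} (C : Submodule F (Fin n → F)) : Prop :=
  ∃ x y : Fin n → F, GoodPair x y ∧ C = span F {x, y}

/-- A simplex point: a 1-dimensional subspace spanned by a vector with exactly
one zero coordinate. -/
def IsSimplexPoint {F : Type} [Field F] {n : ℕ} (P : Submodule F (Fin n → F)) : Prop :=
  ∃ x : Fin n → F, (∃! i, x i = 0) ∧ P = span F {x}

/-- Two simplex points are collinear: they are spanned by the two rows of a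
generator matrix of a simplex code, i.e. there is a simplex line containing both. -/
def PtCollinear {F : Type} [Field F] {n : ℕ} (P Q : Submodule F (Fin n → F)) : Prop :=
  ∃ x y : Fin n → F, GoodPair x y ∧ P = span F {x} ∧ Q = span F {y}

/-- A clique of the graph Γ of simplex lines: all members are simplex lines and
any two distinct members intersect in a 1-dimensional subspace. -/
def IsGammaClique {F : Type} [Field F] {n : ℕ} (T : Set (Submodule F (Fin n → F))) : Prop :=
  (∀ L ∈ T, IsSimplexLine L) ∧
    ∀ L ∈ T, ∀ L' ∈ T, L ≠ L' → finrank F ↥(L ⊓ L') = 1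

/-- A top of Γ: a maximal clique of Γ consisting of all simplex lines contained
in a fixed 3-dimensional subspace (projective plane). -/
def IsGammaTop {F : Type} [Field F] {n : ℕ} (T : Set (Submodule F (Fin n → F))) : Prop :=
  IsGammaClique T ∧ (∀ T' : Set (Submodule F (Fin n → F)), IsGammaClique T' → T ⊆ T' → T' = T) ∧
    ∃ W : Submodule F (Fin n → F), finrank F ↥W = 3 ∧
      T = {L | IsSimplexLine L ∧ L ≤ W}

/-- A monomial linear automorphism: `x ↦ (a₁ x_{σ(1)}, …, aₙ x_{σ(n)})` with all
`aᵢ` nonzero and `σ` a permutation. -/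
def IsMonomial {F : Type} [Field F] {n : ℕ} (l : (Fin n → F) ≃ₗ[F] (Fin n → F)) : Prop :=
  ∃ (a : Fin n → F) (σ : Equiv.Perm (Fin n)),
    (∀ i, a i ≠ 0) ∧ ∀ (x : Fin n → F) (i : Fin n), l x i = a i * x (σ i)

/-- Coordinatewise inversion `I` (with `0⁻¹ = 0`). -/
def vecInv {F : Type} [Field F] {n : ℕ} (x : Fin n → F) : Fin n → F := fun i => (x i)⁻¹

section Aux

variable {F : Type} [Field F] {n : ℕ}

theorem goodpair_combo {u v : Fin n → F} (h : GoodPair u v) {a b c d : F}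
    (hdet : a * d - b * c ≠ 0) :
    GoodPair (fun i => a * u i + b * v i) (fun i => c * u i + d * v i) := by
  intro i j hij heq
  have h0 := h i j hij
  apply h0
  have key : (a * d - b * c) * (u i * v j - u j * v i) = 0 := by linear_combination heq
  rcases mul_eq_zero.mp key with h1 | h1
  · exact absurd h1 hdet
  · exact sub_eq_zero.mp h1

open Classical in
/-- The column class map. -/
noncomputable def cls (u v : Fin n → F) (i : Fin n) : Option F :=
  if u i = 0 then none else some (v i / u i)

theorem cls_injective {u v : Fin n → F} (h : GoodPair u v) :
    Function.Injective (cls u v) := by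
  intro i j hij
  by_contra hne
  have h0 := h i j hne
  unfold cls at hij
  by_cases hi : u i = 0
  · by_cases hj : u j = 0
    · apply h0; rw [hi, hj]; ring
    · rw [if_pos hi, if_neg hj] at hij; exact (Option.some_ne_none _) hij.symm
  · by_cases hj : u j = 0
    · rw [if_neg hi, if_pos hj] at hij; exact (Option.some_ne_none _) hij
    · rw [if_neg hi, if_neg hj] at hij
      have h2 := Option.some_injective _ hij
      field_simp at h2
      exact h0 (by linear_combination -h2)

theorem col_ne_zero [Nontrivial (Fin n)] {u v : Fin n → F} (h : GoodPair u v) (i : Fin n) :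
    ¬(u i = 0 ∧ v i = 0) := by
  rintro ⟨h1, h2⟩
  obtain ⟨j, hj⟩ := exists_ne i
  exact h i j (Ne.symm hj) (by rw [h1, h2]; ring)

/-- The monomial linear automorphism determined by scalars `a` and a permutation `σ`. -/
def monomialEquiv (a : Fin n → F) (ha : ∀ i, a i ≠ 0) (σ : Equiv.Perm (Fin n)) :
    (Fin n → F) ≃ₗ[F] (Fin n → F) where
  toFun w i := a i * w (σ i)
  invFun w i := (a (σ.symm i))⁻¹ * w (σ.symm i)
  left_inv w := by
    funext i
    simp only [Equiv.apply_symm_apply]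
    rw [inv_mul_cancel_left₀ (ha _)]
  right_inv w := by
    funext i
    simp only [Equiv.symm_apply_apply]
    rw [mul_inv_cancel_left₀ (ha i)]
  map_add' w z := by funext i; simp [mul_add]
  map_smul' c w := by funext i; simp [smul_eq_mul]; ring

theorem monomialEquiv_isMonomial (a : Fin n → F) (ha : ∀ i, a i ≠ 0) (σ : Equiv.Perm (Fin n)) :
    IsMonomial (monomialEquiv a ha σ) :=
  ⟨a, σ, ha, fun _ _ => rfl⟩

/-- If two vectors written in a basis have proportional coefficient pairs then
their spans coincide; contrapositive form. -/
theorem det_ne_of_span_ne {u v p q : Fin n → F} {a₁ b₁ a₂ b₂ : F}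
    (h₁ : (fun i => a₁ * u i + b₁ * v i) = p) (h₂ : (fun i => a₂ * u i + b₂ * v i) = q)
    (hp : p ≠ 0) (hq : q ≠ 0) (hne : span F {p} ≠ span F {q}) :
    a₁ * b₂ - a₂ * b₁ ≠ 0 := by
  intro hd
  apply hne
  have hab : ¬(a₁ = 0 ∧ b₁ = 0) := by
    rintro ⟨ha, hb⟩
    apply hp
    rw [← h₁]; funext i; simp [ha, hb]
  classical
  set c : F := if a₁ = 0 then b₂ / b₁ else a₂ / a₁ with hc
  have hca : c * a₁ = a₂ ∧ c * b₁ = b₂ := by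
    by_cases ha : a₁ = 0
    · have hb : b₁ ≠ 0 := fun h => hab ⟨ha, h⟩
      have ha2 : a₂ = 0 := by
        have h3 : a₂ * b₁ = 0 := by linear_combination (-1 : F) * hd + b₂ * ha
        exact (mul_eq_zero.mp h3).resolve_right hb
      constructor
      · rw [hc, if_pos ha, ha, ha2]; ring
      · rw [hc, if_pos ha]; field_simp
    · constructor
      · rw [hc, if_neg ha]; field_simp
      · rw [hc, if_neg ha]; field_simp; linear_combination (-1 : F) * hd
  have hqp : q = c • p := by
    rw [← h₁, ← h₂]; funext i
    simp only [Pi.smul_apply, smul_eq_mul]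
    linear_combination u i * hca.1.symm + v i * hca.2.symm
  have hc0 : c ≠ 0 := by
    intro h0; apply hq; rw [hqp, h0, zero_smul]
  rw [hqp, Submodule.span_singleton_smul_eq (IsUnit.mk0 c hc0)]

/-- Columns with the same projective class are proportional. -/
theorem prop_of_cls_eq {X₁ X₂ Y₁ Y₂ : Fin n → F} {j i : Fin n}
    (hX : ¬(X₁ j = 0 ∧ X₂ j = 0)) (hY : ¬(Y₁ i = 0 ∧ Y₂ i = 0))
    (h : cls X₁ X₂ j = cls Y₁ Y₂ i) :
    ∃ a : F, a ≠ 0 ∧ a * X₁ j = Y₁ i ∧ a * X₂ j = Y₂ i := by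
  unfold cls at h
  by_cases hx : X₁ j = 0
  · rw [if_pos hx] at h
    have hy : Y₁ i = 0 := by
      by_contra hy
      rw [if_neg hy] at h
      exact (Option.some_ne_none _) h.symm
    have hx2 : X₂ j ≠ 0 := fun h2 => hX ⟨hx, h2⟩
    have hy2 : Y₂ i ≠ 0 := fun h2 => hY ⟨hy, h2⟩
    refine ⟨Y₂ i / X₂ j, div_ne_zero hy2 hx2, ?_, ?_⟩
    · rw [hx, hy]; ring
    · field_simp
  · rw [if_neg hx] at h
    have hy : Y₁ i ≠ 0 := by
      intro hy
      rw [if_pos hy] at h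
      exact (Option.some_ne_none _) h
    rw [if_neg hy] at h
    have h2 := Option.some_injective _ h
    refine ⟨Y₁ i / X₁ j, div_ne_zero hy hx, ?_, ?_⟩
    · field_simp
    · field_simp
      field_simp at h2
      linear_combination h2

end Aux

/-- For any mutually distinct points P₁, P₂, P₃ on a simplex line L and mutually
distinct points P₁′, P₂′, P₃′ on a simplex line L′, there is a monomial linear
automorphism l with l(Pᵢ) = Pᵢ′ for i = 1, 2, 3. -/
theorem monomial_three_transitive (F : Type) [Field F] [Fintype F]
    (L L' : Submodule F (Fin (Fintype.card F + 1) → F))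
    (hL : IsSimplexLine L) (hL' : IsSimplexLine L')
    (x₁ x₂ x₃ y₁ y₂ y₃ : Fin (Fintype.card F + 1) → F)
    (hx₁ : x₁ ∈ L) (hx₂ : x₂ ∈ L) (hx₃ : x₃ ∈ L)
    (hy₁ : y₁ ∈ L') (hy₂ : y₂ ∈ L') (hy₃ : y₃ ∈ L')
    (hnx₁ : x₁ ≠ 0) (hnx₂ : x₂ ≠ 0) (hnx₃ : x₃ ≠ 0)
    (hny₁ : y₁ ≠ 0) (hny₂ : y₂ ≠ 0) (hny₃ : y₃ ≠ 0)
    (hx₁₂ : span F {x₁} ≠ span F {x₂})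
    (hx₁₃ : span F {x₁} ≠ span F {x₃})
    (hx₂₃ : span F {x₂} ≠ span F {x₃})
    (hy₁₂ : span F {y₁} ≠ span F {y₂})
    (hy₁₃ : span F {y₁} ≠ span F {y₃})
    (hy₂₃ : span F {y₂} ≠ span F {y₃}) :
    ∃ l : (Fin (Fintype.card F + 1) → F) ≃ₗ[F] (Fin (Fintype.card F + 1) → F),
      IsMonomial l ∧
      Submodule.map (l : (Fin (Fintype.card F + 1) → F) →ₗ[F] (Fin (Fintype.card F + 1) → F))
          (span F {x₁}) = span F {y₁} ∧
      Submodule.map (l : (Fin (Fintype.card F + 1) → F) →ₗ[F] (Fin (Fintype.card F + 1) → F))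
          (span F {x₂}) = span F {y₂} ∧
      Submodule.map (l : (Fin (Fintype.card F + 1) → F) →ₗ[F] (Fin (Fintype.card F + 1) → F))
          (span F {x₃}) = span F {y₃} := by
  classical
  haveI : Nontrivial (Fin (Fintype.card F + 1)) := by
    have h1 : 0 < Fintype.card F := Fintype.card_pos
    exact Fin.nontrivial_iff_two_le.mpr (by omega)
  obtain ⟨u, v, hgp, hLs⟩ := hL
  obtain ⟨u', v', hgp', hLs'⟩ := hL'
  rw [hLs, Submodule.mem_span_pair] at hx₁ hx₂ hx₃
  rw [hLs', Submodule.mem_span_pair] at hy₁ hy₂ hy₃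
  obtain ⟨a₁, b₁, h₁⟩ := hx₁
  obtain ⟨a₂, b₂, h₂⟩ := hx₂
  obtain ⟨a₃, b₃, h₃⟩ := hx₃
  obtain ⟨c₁, d₁, k₁⟩ := hy₁
  obtain ⟨c₂, d₂, k₂⟩ := hy₂
  obtain ⟨c₃, d₃, k₃⟩ := hy₃
  have h₁' : (fun i => a₁ * u i + b₁ * v i) = x₁ := by
    funext i; have := congrFun h₁ i; simpa using this
  have h₂' : (fun i => a₂ * u i + b₂ * v i) = x₂ := by
    funext i; have := congrFun h₂ i; simpa using this
  have h₃' : (fun i => a₃ * u i + b₃ * v i) = x₃ := by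
    funext i; have := congrFun h₃ i; simpa using this
  have k₁' : (fun i => c₁ * u' i + d₁ * v' i) = y₁ := by
    funext i; have := congrFun k₁ i; simpa using this
  have k₂' : (fun i => c₂ * u' i + d₂ * v' i) = y₂ := by
    funext i; have := congrFun k₂ i; simpa using this
  have k₃' : (fun i => c₃ * u' i + d₃ * v' i) = y₃ := by
    funext i; have := congrFun k₃ i; simpa using this
  have hd12 : a₁ * b₂ - a₂ * b₁ ≠ 0 := det_ne_of_span_ne h₁' h₂' hnx₁ hnx₂ hx₁₂
  have hd13 : a₁ * b₃ - a₃ * b₁ ≠ 0 := det_ne_of_span_ne h₁' h₃' hnx₁ hnx₃ hx₁₃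
  have hd23 : a₂ * b₃ - a₃ * b₂ ≠ 0 := det_ne_of_span_ne h₂' h₃' hnx₂ hnx₃ hx₂₃
  have kd12 : c₁ * d₂ - c₂ * d₁ ≠ 0 := det_ne_of_span_ne k₁' k₂' hny₁ hny₂ hy₁₂
  have kd13 : c₁ * d₃ - c₃ * d₁ ≠ 0 := det_ne_of_span_ne k₁' k₃' hny₁ hny₃ hy₁₃
  have kd23 : c₂ * d₃ - c₃ * d₂ ≠ 0 := det_ne_of_span_ne k₂' k₃' hny₂ hny₃ hy₂₃
  set α : F := (a₃ * b₂ - a₂ * b₃) / (a₁ * b₂ - a₂ * b₁) with hαdef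
  set β : F := (a₁ * b₃ - a₃ * b₁) / (a₁ * b₂ - a₂ * b₁) with hβdef
  set γ : F := (c₃ * d₂ - c₂ * d₃) / (c₁ * d₂ - c₂ * d₁) with hγdef
  set δ : F := (c₁ * d₃ - c₃ * d₁) / (c₁ * d₂ - c₂ * d₁) with hδdef
  have hα : α ≠ 0 := div_ne_zero (fun h => hd23 (by linear_combination -h)) hd12
  have hβ : β ≠ 0 := div_ne_zero hd13 hd12
  have hγ : γ ≠ 0 := div_ne_zero (fun h => kd23 (by linear_combination -h)) kd12
  have hδ : δ ≠ 0 := div_ne_zero kd13 kd12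
  have hA : α * a₁ + β * a₂ = a₃ := by rw [hαdef, hβdef, div_mul_eq_mul_div, div_mul_eq_mul_div, ← add_div, div_eq_iff hd12]; ring
  have hB : α * b₁ + β * b₂ = b₃ := by rw [hαdef, hβdef, div_mul_eq_mul_div, div_mul_eq_mul_div, ← add_div, div_eq_iff hd12]; ring
  have hC : γ * c₁ + δ * c₂ = c₃ := by rw [hγdef, hδdef, div_mul_eq_mul_div, div_mul_eq_mul_div, ← add_div, div_eq_iff kd12]; ring
  have hD : γ * d₁ + δ * d₂ = d₃ := by rw [hγdef, hδdef, div_mul_eq_mul_div, div_mul_eq_mul_div, ← add_div, div_eq_iff kd12]; ring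
  set X₁ : Fin (Fintype.card F + 1) → F := fun i => (α * a₁) * u i + (α * b₁) * v i with hX₁def
  set X₂ : Fin (Fintype.card F + 1) → F := fun i => (β * a₂) * u i + (β * b₂) * v i with hX₂def
  set Y₁ : Fin (Fintype.card F + 1) → F := fun i => (γ * c₁) * u' i + (γ * d₁) * v' i with hY₁def
  set Y₂ : Fin (Fintype.card F + 1) → F := fun i => (δ * c₂) * u' i + (δ * d₂) * v' i with hY₂def
  have hX₁x : X₁ = α • x₁ := by
    funext i; rw [← h₁']; simp only [hX₁def, Pi.smul_apply, smul_eq_mul]; ring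
  have hX₂x : X₂ = β • x₂ := by
    funext i; rw [← h₂']; simp only [hX₂def, Pi.smul_apply, smul_eq_mul]; ring
  have hY₁y : Y₁ = γ • y₁ := by
    funext i; rw [← k₁']; simp only [hY₁def, Pi.smul_apply, smul_eq_mul]; ring
  have hY₂y : Y₂ = δ • y₂ := by
    funext i; rw [← k₂']; simp only [hY₂def, Pi.smul_apply, smul_eq_mul]; ring
  have hXsum : X₁ + X₂ = x₃ := by
    funext i; rw [← h₃']; simp only [hX₁def, hX₂def, Pi.add_apply]
    linear_combination u i * hA + v i * hB
  have hYsum : Y₁ + Y₂ = y₃ := by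
    funext i; rw [← k₃']; simp only [hY₁def, hY₂def, Pi.add_apply]
    linear_combination u' i * hC + v' i * hD
  have hgpX : GoodPair X₁ X₂ := by
    apply goodpair_combo hgp
    have he : (α * a₁) * (β * b₂) - (α * b₁) * (β * a₂) = α * β * (a₁ * b₂ - a₂ * b₁) := by ring
    rw [he]
    exact mul_ne_zero (mul_ne_zero hα hβ) hd12
  have hgpY : GoodPair Y₁ Y₂ := by
    apply goodpair_combo hgp'
    have he : (γ * c₁) * (δ * d₂) - (γ * d₁) * (δ * c₂) = γ * δ * (c₁ * d₂ - c₂ * d₁) := by ring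
    rw [he]
    exact mul_ne_zero (mul_ne_zero hγ hδ) kd12
  have hbijX : Function.Bijective (cls X₁ X₂) := by
    rw [Fintype.bijective_iff_injective_and_card]
    exact ⟨cls_injective hgpX, by simp⟩
  have hbijY : Function.Bijective (cls Y₁ Y₂) := by
    rw [Fintype.bijective_iff_injective_and_card]
    exact ⟨cls_injective hgpY, by simp⟩
  set eX := Equiv.ofBijective _ hbijX with heX
  set eY := Equiv.ofBijective _ hbijY with heY
  set σ : Equiv.Perm (Fin (Fintype.card F + 1)) := eY.trans eX.symm with hσdef
  have hσ : ∀ i, cls X₁ X₂ (σ i) = cls Y₁ Y₂ i := by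
    intro i
    have := eX.apply_symm_apply (eY i)
    exact this
  have hprop : ∀ i, ∃ a : F, a ≠ 0 ∧ a * X₁ (σ i) = Y₁ i ∧ a * X₂ (σ i) = Y₂ i :=
    fun i => prop_of_cls_eq (col_ne_zero hgpX (σ i)) (col_ne_zero hgpY i) (hσ i)
  choose a ha ha1 ha2 using hprop
  set l := monomialEquiv a ha σ with hldef
  have hlX₁ : l X₁ = Y₁ := funext fun i => ha1 i
  have hlX₂ : l X₂ = Y₂ := funext fun i => ha2 i
  have hlx₁ : l x₁ = (α⁻¹ * γ) • y₁ := by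
    have hx1 : x₁ = α⁻¹ • X₁ := by
      rw [hX₁x, smul_smul, inv_mul_cancel₀ hα, one_smul]
    rw [hx1, map_smul, hlX₁, hY₁y, smul_smul]
  have hlx₂ : l x₂ = (β⁻¹ * δ) • y₂ := by
    have hx2 : x₂ = β⁻¹ • X₂ := by
      rw [hX₂x, smul_smul, inv_mul_cancel₀ hβ, one_smul]
    rw [hx2, map_smul, hlX₂, hY₂y, smul_smul]
  have hlx₃ : l x₃ = y₃ := by
    rw [← hXsum, map_add, hlX₁, hlX₂, hYsum]
  refine ⟨l, monomialEquiv_isMonomial a ha σ, ?_, ?_, ?_⟩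
  · rw [Submodule.map_span, Set.image_singleton]
    show span F {l x₁} = span F {y₁}
    rw [hlx₁]
    exact Submodule.span_singleton_smul_eq
      (IsUnit.mk0 _ (mul_ne_zero (inv_ne_zero hα) hγ)) _
  · rw [Submodule.map_span, Set.image_singleton]
    show span F {l x₂} = span F {y₂}
    rw [hlx₂]
    exact Submodule.span_singleton_smul_eq
      (IsUnit.mk0 _ (mul_ne_zero (inv_ne_zero hβ) hδ)) _
  · rw [Submodule.map_span, Set.image_singleton]
    show span F {l x₃} = span F {y₃}
    rw [hlx₃]
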